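/- The quotient q_1 = (N − r_1)/(d·m_1) can be recovered exactly from the corrupted remainders: q_1 is the unique integer with 0 ≤ q_1 < M_1 satisfying q_1 ≡ Σ_{i=2}^{k} [(r̄_i − r̄_1)/d]·u_i·(M_1/m_i) (mod M_1), where M_1 = M/m_1 and [x] denotes the integer nearest to x (the hypotheses guarantee no ties occur). -/

import Mathlib

/-- The quotient `q₁ = (N - r 0) / (d * m 0)` can be recovered exactly from the corrupted
remainders: it is the unique integer with `0 ≤ q₁ < M₁` (where `M₁ = M / m 0 = ∏ i ≠ 0, m i`)
satisfying `q₁ ≡ ∑_{i ≠ 0} round((r̄ i - r̄ 0) / d) * u i * (M₁ / m i)  (mod M₁)`. -/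
theorem first_quotient_from_corrupted_remainders
    (k : ℕ) (hk : 0 < k) (d : ℤ) (hd : 0 < d)
    (m : Fin k → ℤ) (hm : ∀ i, 0 < m i)
    (hcop : ∀ i j, i ≠ j → IsCoprime (m i) (m j))
    (M : ℤ) (hM : M = ∏ i, m i)
    (r : Fin k → ℤ) (hr : ∀ i, 0 ≤ r i ∧ r i < d * m i)
    (hcong : ∀ i j, d ∣ r i - r j)
    (N : ℤ) (hNrange : 0 ≤ N ∧ N < d * M)
    (hN : ∀ i, N ≡ r i [ZMOD d * m i])
    (u : Fin k → ℤ)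
    (hu : ∑ i, u i * ∏ j ∈ Finset.univ.erase i, m j = 1)
    (Δr : Fin k → ℤ) (hΔ : ∀ i, 4 * |Δr i| < d)
    (rb : Fin k → ℤ) (hrb : ∀ i, rb i = r i + Δr i)
    (q₁ : ℤ) (hq₁ : q₁ = (N - r ⟨0, hk⟩) / (d * m ⟨0, hk⟩))
    (M₁ : ℤ) (hM₁ : M₁ = ∏ i ∈ Finset.univ.erase (⟨0, hk⟩ : Fin k), m i)
    (S : ℤ)
    (hS : S = ∑ i ∈ Finset.univ.erase (⟨0, hk⟩ : Fin k),
        (round (((rb i - rb ⟨0, hk⟩ : ℤ) : ℚ) / (d : ℚ))) * u i *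
          ∏ l ∈ (Finset.univ.erase (⟨0, hk⟩ : Fin k)).erase i, m l) :
    (0 ≤ q₁ ∧ q₁ < M₁ ∧ q₁ ≡ S [ZMOD M₁]) ∧
      ∀ x : ℤ, 0 ≤ x → x < M₁ → x ≡ S [ZMOD M₁] → x = q₁ := by
  have hd0 : d ≠ 0 := hd.ne'
  set i0 : Fin k := ⟨0, hk⟩ with hi0
  set s : Finset (Fin k) := Finset.univ.erase i0 with hs
  -- the exact quotients
  have hdvdN : ∀ i, d * m i ∣ N - r i := fun i => (hN i).symm.dvd
  choose t ht using hdvdN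
  choose c hc using fun i => hcong i i0
  -- q₁ = t i0
  have hq : q₁ = t i0 := by
    rw [hq₁, ht i0, Int.mul_ediv_cancel_left _ (mul_pos hd (hm i0)).ne']
  -- M = m i0 * M₁
  have hMsplit : M = m i0 * M₁ := by
    rw [hM, hM₁, Finset.mul_prod_erase _ _ (Finset.mem_univ i0)]
  have hM₁pos : 0 < M₁ := by
    rw [hM₁]; exact Finset.prod_pos fun i _ => hm i
  -- bounds on t i0
  have ht0lb : 0 ≤ t i0 := by
    have h1 := (hr i0).2
    have h2 := hNrange.1
    have h3 := ht i0
    nlinarith [mul_pos hd (hm i0)]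
  have ht0ub : t i0 < M₁ := by
    have h1 := (hr i0).1
    have h2 := hNrange.2
    have h3 := ht i0
    nlinarith [mul_pos hd (hm i0), hMsplit]
  -- the rounds compute c i
  have hround : ∀ i, round (((rb i - rb i0 : ℤ) : ℚ) / (d : ℚ)) = c i := by
    intro i
    have hdq : (d : ℚ) ≠ 0 := Int.cast_ne_zero.2 hd0
    have : ((rb i - rb i0 : ℤ) : ℚ) / (d : ℚ)
        = (c i : ℚ) + ((Δr i - Δr i0 : ℤ) : ℚ) / (d : ℚ) := by
      rw [hrb i, hrb i0]
      have : r i + Δr i - (r i0 + Δr i0) = d * c i + (Δr i - Δr i0) := by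
        have := hc i; linarith
      rw [this]; push_cast; field_simp
    rw [this, round_intCast_add]
    have hz : round (((Δr i - Δr i0 : ℤ) : ℚ) / (d : ℚ)) = 0 := by
      rw [round_eq_zero_iff]
      have hΔi := hΔ i
      have hΔ0 := hΔ i0
      have habs : |(Δr i - Δr i0 : ℤ)| * 2 < d := by
        have := abs_sub (Δr i) (Δr i0); omega
      have hdq' : (0 : ℚ) < (d : ℚ) := by exact_mod_cast hd
      have habsq : |((Δr i - Δr i0 : ℤ) : ℚ)| < (d : ℚ) / 2 := by
        rw [← Int.cast_abs, lt_div_iff₀ (by norm_num)]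
        exact_mod_cast habs
      have h2 : |((Δr i - Δr i0 : ℤ) : ℚ) / (d : ℚ)| < 1 / 2 := by
        rw [abs_div, abs_of_pos hdq', div_lt_iff₀ hdq']
        nlinarith
      exact ⟨(abs_lt.1 h2).1.le, (abs_lt.1 h2).2⟩
    rw [hz, add_zero]
  -- rewrite S
  have hS' : S = ∑ i ∈ s, c i * u i * ∏ l ∈ s.erase i, m l := by
    rw [hS]
    exact Finset.sum_congr rfl fun i _ => by rw [hround i]
  -- key congruence: for each i ∈ s, m i ∣ S - t i0
  have hkey : ∀ i ∈ s, m i ∣ S - t i0 := by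
    intro i hi
    have hii0 : i ≠ i0 := Finset.ne_of_mem_erase hi
    set Q : Fin k → ℤ := fun j => ∏ l ∈ Finset.univ.erase j, m l with hQ
    -- Step A : m i ∣ 1 - u i * Q i
    have hA : m i ∣ 1 - u i * Q i := by
      have h0 : u i * Q i + ∑ j ∈ Finset.univ.erase i, u j * Q j = 1 := by
        rw [← hu]; exact Finset.add_sum_erase Finset.univ (fun j => u j * Q j) (Finset.mem_univ i)
      have h1 : ∑ j ∈ Finset.univ.erase i, u j * Q j = 1 - u i * Q i := by linarith
      rw [← h1]
      refine Finset.dvd_sum fun j hj => ?_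
      have hji : j ≠ i := Finset.ne_of_mem_erase hj
      exact Dvd.dvd.mul_left
        (Finset.dvd_prod_of_mem m (Finset.mem_erase.2 ⟨fun h => hji h.symm, Finset.mem_univ i⟩)) _
    -- m i0 * (prod over s.erase j) = Q j for j ∈ s
    have hQP : ∀ j ∈ s, m i0 * ∏ l ∈ s.erase j, m l = Q j := by
      intro j hj
      have hji0 : j ≠ i0 := Finset.ne_of_mem_erase hj
      have hmem : i0 ∈ Finset.univ.erase j :=
        Finset.mem_erase.2 ⟨fun h => hji0 h.symm, Finset.mem_univ i0⟩
      show m i0 * ∏ l ∈ s.erase j, m l = ∏ l ∈ Finset.univ.erase j, m l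
      rw [← Finset.mul_prod_erase _ _ hmem]
      congr 1
      rw [hs, Finset.erase_right_comm]
    -- Step B : m i ∣ m i0 * S - c i * u i * Q i
    have hB : m i ∣ m i0 * S - c i * u i * Q i := by
      have h1 : m i0 * S = ∑ j ∈ s, c j * u j * Q j := by
        rw [hS', Finset.mul_sum]
        refine Finset.sum_congr rfl fun j hj => ?_
        rw [← hQP j hj]; ring
      have h2 : c i * u i * Q i + ∑ j ∈ s.erase i, c j * u j * Q j = ∑ j ∈ s, c j * u j * Q j :=
        Finset.add_sum_erase s (fun j => c j * u j * Q j) hi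
      have h3 : m i0 * S - c i * u i * Q i = ∑ j ∈ s.erase i, c j * u j * Q j := by
        rw [h1]; linarith
      rw [h3]
      refine Finset.dvd_sum fun j hj => ?_
      have hji : j ≠ i := (Finset.mem_erase.1 hj).1
      exact Dvd.dvd.mul_left
        (Finset.dvd_prod_of_mem m (Finset.mem_erase.2 ⟨fun h => hji h.symm, Finset.mem_univ i⟩)) _
    -- Step C : m i0 * t i0 = m i * t i + c i
    have hC : m i0 * t i0 = m i * t i + c i := by
      have h1 := ht i0
      have h2 := ht i
      have h3 := hc i
      have : d * (m i0 * t i0) = d * (m i * t i + c i) := by ring_nf; nlinarith [h1, h2, h3]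
      exact mul_left_cancel₀ hd0 this
    have hmul : m i ∣ m i0 * (S - t i0) := by
      have : m i0 * (S - t i0) =
          (m i0 * S - c i * u i * Q i) + c i * (u i * Q i - 1) + (c i - m i0 * t i0) := by ring
      rw [this]
      refine dvd_add (dvd_add hB ?_) ?_
      · have : m i ∣ u i * Q i - 1 := by
          have := dvd_neg.2 hA; simpa using this
        exact this.mul_left _
      · exact ⟨-t i, by rw [hC]; ring⟩
    exact (hcop i i0 hii0).dvd_of_dvd_mul_left hmul
  -- combine
  have hdvdM₁ : M₁ ∣ S - t i0 := by
    rw [hM₁]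
    refine Finset.prod_dvd_of_coprime ?_ (fun i hi => hkey i hi)
    intro a ha b hb hab
    exact hcop a b hab
  have hcongr : q₁ ≡ S [ZMOD M₁] := by
    rw [hq]; exact (Int.modEq_iff_dvd.2 hdvdM₁).symm.symm
  refine ⟨⟨hq ▸ ht0lb, hq ▸ ht0ub, hcongr⟩, fun x hx0 hx1 hx => ?_⟩
  have h1 : x ≡ q₁ [ZMOD M₁] := hx.trans hcongr.symm
  have h2 : M₁ ∣ q₁ - x := h1.dvd
  have h3 : |q₁ - x| < M₁ := by
    rw [hq] at *
    exact abs_lt.2 ⟨by linarith, by linarith⟩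
  have := Int.eq_zero_of_abs_lt_dvd h2 h3
  omega
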